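/- (Rematching, asymmetric case) In the asymmetric setup below, let ε̄ ≥ 0 and ε := (1+ε̄)^m − 1, and let R = (R_i)_{i∈Ā} be an ε̄-local optimum of J with respect to the endowed valuations v̄_i; set R_i := ∅ for i ∈ A∖Ā. Then there exists a partial matching ρ : A → H ∪ {⊥} (i.e., ρ(i) = ρ(k) ≠ ⊥ implies i = k) such that ∏_{i∈A} v_i(R_i ∪ {ρ(i)})^{w_i} ≥ OPT / ( (2 + n·w_max)·e·(1+ε) ), where R_i ∪ {⊥} is interpreted as R_i. -/

import Mathlib

set_option maxHeartbeats 2000000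

open Finset

section Submod
variable {G : Type*} [DecidableEq G] (v : Finset G → ℝ)
  (hmono : ∀ S T : Finset G, S ⊆ T → v S ≤ v T)
  (hsub : ∀ S T : Finset G, v (S ∩ T) + v (S ∪ T) ≤ v S + v T)
  (hv0 : v ∅ = 0)

include hmono hv0 in
lemma v_nonneg (S : Finset G) : 0 ≤ v S := by
  have := hmono ∅ S (empty_subset S); rwa [hv0] at this

include hmono hsub in
lemma marg_superadd (S T : Finset G) :
    v (S ∪ T) ≤ v S + ∑ j ∈ T, (v (S ∪ {j}) - v S) := by
  classical
  induction T using Finset.induction_on with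
  | empty => simp
  | @insert a T ha ih =>
    rw [Finset.sum_insert ha]
    have key : v (S ∪ insert a T) ≤ v (S ∪ T) + (v (S ∪ {a}) - v S) := by
      have h := hsub (S ∪ T) (S ∪ {a})
      have h1 : (S ∪ T) ∪ (S ∪ {a}) = S ∪ insert a T := by
        ext x; simp [mem_union, mem_insert]; tauto
      have h2 : S ⊆ (S ∪ T) ∩ (S ∪ {a}) := by
        intro x hx; simp [mem_inter, mem_union, hx]
      have h3 := hmono _ _ h2
      rw [h1] at h
      linarith
    linarith

include hmono hsub hv0 in
lemma marg_le_singleton (S : Finset G) (j : G) : v (S ∪ {j}) ≤ v S + v {j} := by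
  by_cases hj : j ∈ S
  · have : S ∪ {j} = S := by
      apply union_eq_left.mpr; simp [hj]
    rw [this]
    have := v_nonneg v hmono hv0 {j}
    linarith
  · have h := hsub S {j}
    have : S ∩ {j} = ∅ := by
      ext x; simp only [mem_inter, mem_singleton, notMem_empty, iff_false, not_and]
      rintro hx rfl; exact hj hx
    rw [this, hv0] at h; linarith

include hmono hsub hv0 in
lemma union_le_add_sum (S T : Finset G) : v (S ∪ T) ≤ v S + ∑ j ∈ T, v {j} := by
  have h := marg_superadd v hmono hsub S T
  have h2 : ∀ j ∈ T, v (S ∪ {j}) - v S ≤ v {j} := by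
    intro j _
    have := marg_le_singleton v hmono hsub hv0 S j; linarith
  have := Finset.sum_le_sum h2
  linarith

include hmono hsub hv0 in
lemma v_le_sum_singletons (T : Finset G) : v T ≤ ∑ j ∈ T, v {j} := by
  have h := union_le_add_sum v hmono hsub hv0 ∅ T
  rw [empty_union, hv0] at h; linarith

include hsub in
lemma erase_marg_le (S : Finset G) (a : G) (ha : a ∈ S) (j : G) (hj : j ∈ S.erase a) :
    v S - v (S.erase j) ≤ v (S.erase a) - v ((S.erase a).erase j) := by
  have h := hsub (S.erase j) ((S.erase a))
  have hja : j ≠ a := (Finset.mem_erase.mp hj).1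
  have h1 : S.erase j ∪ S.erase a = S := by
    ext x
    simp only [mem_union, mem_erase]
    constructor
    · rintro (⟨_, h⟩ | ⟨_, h⟩) <;> exact h
    · intro hx
      by_cases hxj : x = j
      · right; exact ⟨hxj ▸ hja, hx⟩
      · left; exact ⟨hxj, hx⟩
  have h2 : S.erase j ∩ S.erase a = (S.erase a).erase j := by
    ext x; simp only [mem_inter, mem_erase]; tauto
  rw [h1, h2] at h
  linarith

include hsub hv0 in
lemma sum_marg_le_total (S : Finset G) : ∑ j ∈ S, (v S - v (S.erase j)) ≤ v S - v ∅ := by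
  classical
  induction S using Finset.induction_on with
  | empty => simp
  | @insert a T ha ih =>
    have hS : (insert a T).erase a = T := Finset.erase_insert ha
    rw [Finset.sum_insert ha, hS]
    have hstep : ∀ j ∈ T, v (insert a T) - v ((insert a T).erase j) ≤ v T - v (T.erase j) := by
      intro j hj
      have hja : j ∈ (insert a T).erase a := by rw [hS]; exact hj
      have := erase_marg_le v hsub (insert a T) a (mem_insert_self a T) j hja
      rw [hS] at this; exact this
    have := Finset.sum_le_sum hstep
    linarith

include hmono hsub hv0 in
lemma marg_le_single (S : Finset G) (j : G) : v S - v (S.erase j) ≤ v {j} := by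
  by_cases hj : j ∈ S
  · have h1 : S.erase j ∪ {j} = S := by
      ext x; simp only [mem_union, mem_erase, mem_singleton]
      constructor
      · rintro (⟨_, h⟩ | rfl) <;> simp [hj, *]
      · intro hx; by_cases hxj : x = j
        · right; exact hxj
        · left; exact ⟨hxj, hx⟩
    have := marg_le_singleton v hmono hsub hv0 (S.erase j) j
    rw [h1] at this; linarith
  · rw [Finset.erase_eq_of_notMem hj]
    have := v_nonneg v hmono hv0 {j}; linarith

end Submod

lemma one_add_sum_le_prod {α : Type*} (s : Finset α) (f : α → ℝ) (h : ∀ j ∈ s, 0 ≤ f j) :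
    1 + ∑ j ∈ s, f j ≤ ∏ j ∈ s, (1 + f j) := by
  classical
  induction s using Finset.induction_on with
  | empty => simp
  | @insert a T ha ih =>
    rw [Finset.sum_insert ha, Finset.prod_insert ha]
    have hfa : 0 ≤ f a := h a (Finset.mem_insert_self a T)
    have hsum : 0 ≤ ∑ j ∈ T, f j :=
      Finset.sum_nonneg (fun j hj => h j (Finset.mem_insert_of_mem hj))
    have ih' := ih (fun j hj => h j (Finset.mem_insert_of_mem hj))
    calc 1 + (f a + ∑ j ∈ T, f j) ≤ (1 + f a) * (1 + ∑ j ∈ T, f j) := by nlinarith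
      _ ≤ (1 + f a) * ∏ j ∈ T, (1 + f j) := by
          apply mul_le_mul_of_nonneg_left ih'; linarith

lemma prod_cancel_off {α : Type*} [Fintype α] [DecidableEq α] (f g : α → ℝ) (S : Finset α)
    (hfg : ∀ x ∉ S, f x = g x) (hgpos : ∀ x ∉ S, 0 < g x)
    (h : ∏ x, f x ≤ ∏ x, g x) :
    ∏ x ∈ S, f x ≤ ∏ x ∈ S, g x := by
  classical
  have hsplitf : ∏ x, f x = (∏ x ∈ S, f x) * ∏ x ∈ Sᶜ, f x :=
    (Finset.prod_mul_prod_compl S f).symm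
  have hsplitg : ∏ x, g x = (∏ x ∈ S, g x) * ∏ x ∈ Sᶜ, g x :=
    (Finset.prod_mul_prod_compl S g).symm
  have heq : ∏ x ∈ Sᶜ, f x = ∏ x ∈ Sᶜ, g x := by
    apply Finset.prod_congr rfl; intro x hx; exact hfg x (Finset.mem_compl.mp hx)
  have hpos : 0 < ∏ x ∈ Sᶜ, g x :=
    Finset.prod_pos (fun x hx => hgpos x (Finset.mem_compl.mp hx))
  rw [hsplitf, hsplitg, heq] at h
  exact le_of_mul_le_mul_right h hpos

lemma ratio_shift_mono {c c' a b : ℝ} (hc' : 0 < c') (hcc : c' ≤ c) (hab : a ≤ b) (ha : 0 ≤ a) :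
    (c + b) / (c + a) ≤ (c' + b) / (c' + a) := by
  rw [div_le_div_iff₀ (by linarith) (by linarith)]
  nlinarith

section LL
variable {G A : Type*} [Fintype G] [DecidableEq G] [Fintype A] [DecidableEq A] [Nonempty A]

lemma lemmaL
    (w : A → ℝ) (hw : ∀ i, 0 < w i) (hwsum : ∑ i, w i = 1)
    (v : A → Finset G → ℝ)
    (hmono : ∀ i, ∀ S T : Finset G, S ⊆ T → v i S ≤ v i T)
    (hsubmod : ∀ i, ∀ S T : Finset G, v i (S ∩ T) + v i (S ∪ T) ≤ v i S + v i T)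
    (hv0 : ∀ i, v i ∅ = 0)
    (J : Finset G) (Abar : Finset A)
    (ℓ : A → G) (hℓpos : ∀ i ∈ Abar, 0 < v i {ℓ i})
    (hℓmax : ∀ i ∈ Abar, ∀ j ∈ J, v i {j} ≤ v i {ℓ i})
    (ε' : ℝ) (hε' : 0 ≤ ε') (m : ℕ) (hJm : J.card ≤ m)
    (R : A → Finset G) (hRsub : ∀ i, R i ⊆ J)
    (hRdisj : ∀ i k, i ≠ k → Disjoint (R i) (R k))
    (hRcover : Abar.biUnion R = J)
    (hloc : ∀ i ∈ Abar, ∀ k ∈ Abar, i ≠ k → ∀ j ∈ R i,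
      ((v i {ℓ i} + v i ((R i).erase j)) / (v i {ℓ i} + v i (R i))) ^ (w i) *
        ((v k {ℓ k} + v k (R k ∪ {j})) / (v k {ℓ k} + v k (R k))) ^ (w k) ≤ 1 + ε')
    (Q : A → Finset G) (hQsub : ∀ i, Q i ⊆ J)
    (hQdisj : ∀ i k, i ≠ k → Disjoint (Q i) (Q k))
    (c : A → ℝ) (hc : ∀ i ∈ Abar, v i {ℓ i} ≤ c i) :
    ∏ i ∈ Abar, ((c i + v i (Q i)) / (c i + v i (R i))) ^ w i ≤
      Real.exp 1 * (1 + ε') ^ m := by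
  classical
  have hvnn : ∀ i (S : Finset G), 0 ≤ v i S := fun i S => v_nonneg (v i) (hmono i) (hv0 i) S
  have hcpos : ∀ i ∈ Abar, 0 < c i := fun i hi => lt_of_lt_of_le (hℓpos i hi) (hc i hi)
  have hdenpos : ∀ i ∈ Abar, 0 < c i + v i (R i) :=
    fun i hi => add_pos_of_pos_of_nonneg (hcpos i hi) (hvnn i _)
  have hvbpos : ∀ i ∈ Abar, ∀ S : Finset G, 0 < v i {ℓ i} + v i S :=
    fun i hi S => add_pos_of_pos_of_nonneg (hℓpos i hi) (hvnn i _)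
  -- owner function
  have hown : ∀ j ∈ J, ∃ k, k ∈ Abar ∧ j ∈ R k := by
    intro j hj
    rw [← hRcover, Finset.mem_biUnion] at hj
    obtain ⟨k, hk, hjk⟩ := hj
    exact ⟨k, hk, hjk⟩
  set K : G → A := fun j => if hj : ∃ k, k ∈ Abar ∧ j ∈ R k then hj.choose
    else Classical.arbitrary A with hK_def
  have hKmem : ∀ j ∈ J, K j ∈ Abar ∧ j ∈ R (K j) := by
    intro j hj
    have h := hown j hj
    rw [hK_def]
    simp only [dif_pos h]
    exact h.choose_spec
  have hKeq : ∀ k ∈ Abar, ∀ j ∈ R k, K j = k := by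
    intro k hk j hj
    have hjJ : j ∈ J := hRsub k hj
    have h := hKmem j hjJ
    by_contra hne
    exact Finset.disjoint_left.mp (hRdisj _ _ hne) h.2 hj
  -- owner-side factor
  set L : G → ℝ := fun j => ((v (K j) {ℓ (K j)} + v (K j) (R (K j))) /
      (v (K j) {ℓ (K j)} + v (K j) ((R (K j)).erase j))) ^ (w (K j)) with hL_def
  have hL1 : ∀ j ∈ J, 1 ≤ L j := by
    intro j hj
    have hk := (hKmem j hj).1
    rw [hL_def]
    rw [← Real.one_rpow (w (K j))]
    apply Real.rpow_le_rpow zero_le_one _ (hw _).le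
    rw [le_div_iff₀ (hvbpos _ hk _), one_mul]
    have := hmono (K j) ((R (K j)).erase j) (R (K j)) (Finset.erase_subset _ _)
    linarith
  -- per-pair bound
  have hpair : ∀ i ∈ Abar, ∀ j ∈ Q i,
      ((c i + v i (R i ∪ {j})) / (c i + v i (R i))) ^ (w i) ≤ (1 + ε') * L j := by
    intro i hi j hj
    have hjJ : j ∈ J := hQsub i hj
    have hk := (hKmem j hjJ).1
    have hjRk := (hKmem j hjJ).2
    by_cases hik : K j = i
    · have hjRi : j ∈ R i := by rwa [hik] at hjRk
      have hRiu : R i ∪ {j} = R i := by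
        apply Finset.union_eq_left.mpr; simpa using hjRi
      rw [hRiu, div_self (hdenpos i hi).ne', Real.one_rpow]
      calc (1 : ℝ) = 1 * 1 := by ring
        _ ≤ (1 + ε') * L j :=
            mul_le_mul (by linarith) (hL1 j hjJ) zero_le_one (by linarith)
    · have hloc' := hloc (K j) hk i hi (fun h => hik h) j hjRk
      have hGle : ((c i + v i (R i ∪ {j})) / (c i + v i (R i))) ≤
          ((v i {ℓ i} + v i (R i ∪ {j})) / (v i {ℓ i} + v i (R i))) :=
        ratio_shift_mono (hℓpos i hi) (hc i hi)
          (hmono i _ _ Finset.subset_union_left) (hvnn i _)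
      set Aq : ℝ := (v (K j) {ℓ (K j)} + v (K j) ((R (K j)).erase j)) /
          (v (K j) {ℓ (K j)} + v (K j) (R (K j))) with hAq_def
      have hAqpos : 0 < Aq := div_pos (hvbpos _ hk _) (hvbpos _ hk _)
      have hLform : L j = (Aq ^ (w (K j)))⁻¹ := by
        rw [hL_def, ← Real.inv_rpow hAqpos.le, hAq_def, inv_div]
      have h1 : (1 + ε') * L j = (1 + ε') / Aq ^ (w (K j)) := by
        rw [hLform, div_eq_mul_inv]
      rw [h1, le_div_iff₀ (Real.rpow_pos_of_pos hAqpos _)]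
      calc ((c i + v i (R i ∪ {j})) / (c i + v i (R i))) ^ w i * Aq ^ (w (K j))
          ≤ ((v i {ℓ i} + v i (R i ∪ {j})) / (v i {ℓ i} + v i (R i))) ^ w i
              * Aq ^ (w (K j)) := by
            apply mul_le_mul_of_nonneg_right _ (Real.rpow_nonneg hAqpos.le _)
            exact Real.rpow_le_rpow
              (div_nonneg (add_nonneg (hcpos i hi).le (hvnn i _)) (hdenpos i hi).le)
              hGle (hw i).le
        _ ≤ 1 + ε' := by rw [mul_comm]; exact hloc'
  -- step 1 : ratio ≤ product of single-item ratios
  have hstep1 : ∀ i ∈ Abar, ((c i + v i (Q i)) / (c i + v i (R i))) ^ w i ≤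
      ∏ j ∈ Q i, ((c i + v i (R i ∪ {j})) / (c i + v i (R i))) ^ (w i) := by
    intro i hi
    have hden := hdenpos i hi
    have hdnn : ∀ j : G, 0 ≤ (c i + v i (R i ∪ {j})) / (c i + v i (R i)) :=
      fun j => div_nonneg (add_nonneg (hcpos i hi).le (hvnn i _)) hden.le
    have hnum : c i + v i (Q i) ≤ (c i + v i (R i)) *
        ∏ j ∈ Q i, ((c i + v i (R i ∪ {j})) / (c i + v i (R i))) := by
      have h1 : v i (Q i) ≤ v i (R i ∪ Q i) := hmono i _ _ Finset.subset_union_right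
      have h2 := marg_superadd (v i) (hmono i) (hsubmod i) (R i) (Q i)
      have h3 : c i + v i (Q i) ≤ (c i + v i (R i)) +
          ∑ j ∈ Q i, (v i (R i ∪ {j}) - v i (R i)) := by linarith
      have h5 := one_add_sum_le_prod (Q i)
        (fun j => (v i (R i ∪ {j}) - v i (R i)) / (c i + v i (R i)))
        (fun j _ => div_nonneg
          (by have := hmono i (R i) (R i ∪ {j}) Finset.subset_union_left; linarith)
          hden.le)
      have h4 : (c i + v i (R i)) *
          (1 + ∑ j ∈ Q i, (v i (R i ∪ {j}) - v i (R i)) / (c i + v i (R i)))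
          = (c i + v i (R i)) + ∑ j ∈ Q i, (v i (R i ∪ {j}) - v i (R i)) := by
        rw [mul_add, mul_one, Finset.mul_sum]
        congr 1
        apply Finset.sum_congr rfl; intro j _; field_simp
      have h6 : ∏ j ∈ Q i, (1 + (v i (R i ∪ {j}) - v i (R i)) / (c i + v i (R i)))
          = ∏ j ∈ Q i, ((c i + v i (R i ∪ {j})) / (c i + v i (R i))) := by
        apply Finset.prod_congr rfl; intro j _; field_simp; ring
      calc c i + v i (Q i)
          ≤ (c i + v i (R i)) *
            (1 + ∑ j ∈ Q i, (v i (R i ∪ {j}) - v i (R i)) / (c i + v i (R i))) := by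
            rw [h4]; exact h3
        _ ≤ (c i + v i (R i)) * ∏ j ∈ Q i, ((c i + v i (R i ∪ {j})) / (c i + v i (R i))) := by
            apply mul_le_mul_of_nonneg_left _ hden.le
            rw [← h6]; exact h5
    have hr : (c i + v i (Q i)) / (c i + v i (R i)) ≤
        ∏ j ∈ Q i, ((c i + v i (R i ∪ {j})) / (c i + v i (R i))) := by
      rw [div_le_iff₀ hden]
      calc c i + v i (Q i) ≤ _ := hnum
        _ = _ := mul_comm _ _
    calc ((c i + v i (Q i)) / (c i + v i (R i))) ^ w i
        ≤ (∏ j ∈ Q i, ((c i + v i (R i ∪ {j})) / (c i + v i (R i)))) ^ w i :=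
          Real.rpow_le_rpow
            (div_nonneg (add_nonneg (hcpos i hi).le (hvnn i _)) hden.le) hr (hw i).le
      _ = ∏ j ∈ Q i, ((c i + v i (R i ∪ {j})) / (c i + v i (R i))) ^ (w i) :=
          (Real.finset_prod_rpow _ _ (fun j _ => hdnn j) _).symm
  -- combine: product over Abar
  have hmain : ∏ i ∈ Abar, ((c i + v i (Q i)) / (c i + v i (R i))) ^ w i ≤
      ∏ i ∈ Abar, ∏ j ∈ Q i, ((1 + ε') * L j) := by
    apply Finset.prod_le_prod
    · intro i hi
      exact Real.rpow_nonneg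
        (div_nonneg (add_nonneg (hcpos i hi).le (hvnn i _)) (hdenpos i hi).le) _
    · intro i hi
      refine (hstep1 i hi).trans ?_
      apply Finset.prod_le_prod
      · intro j _
        exact Real.rpow_nonneg
          (div_nonneg (add_nonneg (hcpos i hi).le (hvnn i _)) (hdenpos i hi).le) _
      · exact hpair i hi
  -- split the double product
  have hsplit : ∏ i ∈ Abar, ∏ j ∈ Q i, ((1 + ε') * L j) =
      (∏ i ∈ Abar, ∏ j ∈ Q i, (1 + ε')) * (∏ i ∈ Abar, ∏ j ∈ Q i, L j) := by
    rw [← Finset.prod_mul_distrib]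
    apply Finset.prod_congr rfl
    intro i _
    rw [← Finset.prod_mul_distrib]
  -- epsilon part
  have hQcard : ∑ i ∈ Abar, (Q i).card ≤ m := by
    have h1 : ∑ i ∈ Abar, (Q i).card = (Abar.biUnion Q).card :=
      (Finset.card_biUnion (fun i _ k _ hne => hQdisj i k hne)).symm
    have h2 : Abar.biUnion Q ⊆ J := by
      intro x hx
      rw [Finset.mem_biUnion] at hx
      obtain ⟨i, _, hxi⟩ := hx
      exact hQsub i hxi
    calc ∑ i ∈ Abar, (Q i).card = (Abar.biUnion Q).card := h1
      _ ≤ J.card := Finset.card_le_card h2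
      _ ≤ m := hJm
  have heps : ∏ i ∈ Abar, ∏ j ∈ Q i, (1 + ε') ≤ (1 + ε') ^ m := by
    have h1 : ∏ i ∈ Abar, ∏ j ∈ Q i, (1 + ε') = (1 + ε') ^ (∑ i ∈ Abar, (Q i).card) := by
      rw [← Finset.prod_pow_eq_pow_sum]
      apply Finset.prod_congr rfl
      intro i _
      rw [Finset.prod_const]
    rw [h1]
    exact pow_le_pow_right₀ (by linarith) hQcard
  -- owner part
  have hLpart : ∏ i ∈ Abar, ∏ j ∈ Q i, L j ≤ Real.exp 1 := by
    have h1 : ∏ i ∈ Abar, ∏ j ∈ Q i, L j = ∏ j ∈ Abar.biUnion Q, L j :=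
      (Finset.prod_biUnion (fun i _ k _ hne => hQdisj i k hne)).symm
    have hBsub : Abar.biUnion Q ⊆ J := by
      intro x hx
      rw [Finset.mem_biUnion] at hx
      obtain ⟨i, _, hxi⟩ := hx
      exact hQsub i hxi
    have h2 : ∏ j ∈ Abar.biUnion Q, L j ≤ ∏ j ∈ J, L j := by
      rw [← Finset.prod_sdiff hBsub]
      have hone : (1:ℝ) ≤ ∏ j ∈ J \ Abar.biUnion Q, L j := by
        calc (1:ℝ) = ∏ j ∈ J \ Abar.biUnion Q, 1 := by rw [Finset.prod_const_one]
          _ ≤ ∏ j ∈ J \ Abar.biUnion Q, L j := by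
            apply Finset.prod_le_prod
            · intro j _; exact zero_le_one
            · intro j hj; exact hL1 j (Finset.mem_sdiff.mp hj).1
      have hBnn : (0:ℝ) ≤ ∏ j ∈ Abar.biUnion Q, L j := by
        apply Finset.prod_nonneg
        intro j hj
        exact le_trans zero_le_one (hL1 j (hBsub hj))
      nlinarith [hBnn, hone]
    have h3 : ∏ j ∈ J, L j = ∏ k ∈ Abar, ∏ j ∈ R k, L j := by
      rw [← hRcover]
      exact Finset.prod_biUnion (fun i _ k _ hne => hRdisj i k hne)
    have h4 : ∀ k ∈ Abar, ∏ j ∈ R k, L j ≤ Real.exp (w k) := by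
      intro k hk
      have h5 : ∀ j ∈ R k, L j = ((v k {ℓ k} + v k (R k)) /
          (v k {ℓ k} + v k ((R k).erase j))) ^ (w k) := by
        intro j hj
        simp only [hL_def]
        rw [hKeq k hk j hj]
      rw [Finset.prod_congr rfl h5]
      have h6 : ∏ j ∈ R k, ((v k {ℓ k} + v k (R k)) / (v k {ℓ k} + v k ((R k).erase j))) ^ (w k)
          = (∏ j ∈ R k, ((v k {ℓ k} + v k (R k)) / (v k {ℓ k} + v k ((R k).erase j)))) ^ (w k) :=
        Real.finset_prod_rpow _ _ (fun j _ => (div_pos (hvbpos k hk _) (hvbpos k hk _)).le) _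
      rw [h6]
      have h7 : ∏ j ∈ R k, ((v k {ℓ k} + v k (R k)) / (v k {ℓ k} + v k ((R k).erase j)))
          ≤ Real.exp 1 := by
        have h8 : ∀ j ∈ R k, (v k {ℓ k} + v k (R k)) / (v k {ℓ k} + v k ((R k).erase j))
            ≤ Real.exp ((v k (R k) - v k ((R k).erase j)) /
                (v k {ℓ k} + v k ((R k).erase j))) := by
          intro j hj
          have hpos := hvbpos k hk ((R k).erase j)
          have hid : (v k {ℓ k} + v k (R k)) / (v k {ℓ k} + v k ((R k).erase j)) =
              (v k (R k) - v k ((R k).erase j)) / (v k {ℓ k} + v k ((R k).erase j)) + 1 := by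
            field_simp
            ring
          rw [hid]
          exact Real.add_one_le_exp _
        calc ∏ j ∈ R k, ((v k {ℓ k} + v k (R k)) / (v k {ℓ k} + v k ((R k).erase j)))
            ≤ ∏ j ∈ R k, Real.exp ((v k (R k) - v k ((R k).erase j)) /
                (v k {ℓ k} + v k ((R k).erase j))) := by
              apply Finset.prod_le_prod
              · intro j _; exact (div_pos (hvbpos k hk _) (hvbpos k hk _)).le
              · exact h8
          _ = Real.exp (∑ j ∈ R k, (v k (R k) - v k ((R k).erase j)) /
                (v k {ℓ k} + v k ((R k).erase j))) := (Real.exp_sum _ _).symm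
          _ ≤ Real.exp 1 := by
              apply Real.exp_le_exp.mpr
              -- the sum of marginal ratios is at most 1
              by_cases hvR : 0 < v k (R k)
              · have h9 : ∀ j ∈ R k, (v k (R k) - v k ((R k).erase j)) /
                    (v k {ℓ k} + v k ((R k).erase j)) ≤
                    (v k (R k) - v k ((R k).erase j)) / v k (R k) := by
                  intro j hj
                  have hjJ : j ∈ J := hRsub k hj
                  have hmarg := marg_le_single (v k) (hmono k) (hsubmod k) (hv0 k) (R k) j
                  have hden2 : v k (R k) ≤ v k {ℓ k} + v k ((R k).erase j) := by
                    have := hℓmax k hk j hjJ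
                    linarith
                  have hnum : 0 ≤ v k (R k) - v k ((R k).erase j) := by
                    have := hmono k ((R k).erase j) (R k) (Finset.erase_subset _ _)
                    linarith
                  exact div_le_div_of_nonneg_left hnum hvR hden2
                calc ∑ j ∈ R k, (v k (R k) - v k ((R k).erase j)) /
                      (v k {ℓ k} + v k ((R k).erase j))
                    ≤ ∑ j ∈ R k, (v k (R k) - v k ((R k).erase j)) / v k (R k) :=
                      Finset.sum_le_sum h9
                  _ = (∑ j ∈ R k, (v k (R k) - v k ((R k).erase j))) / v k (R k) := by
                      rw [Finset.sum_div]
                  _ ≤ 1 := by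
                      rw [div_le_one hvR]
                      have := sum_marg_le_total (v k) (hsubmod k) (hv0 k) (R k)
                      rw [hv0 k] at this
                      linarith
              · have hvR0 : v k (R k) = 0 := le_antisymm (not_lt.mp hvR) (hvnn k _)
                have h9 : ∀ j ∈ R k, (v k (R k) - v k ((R k).erase j)) /
                    (v k {ℓ k} + v k ((R k).erase j)) ≤ 0 := by
                  intro j hj
                  apply div_nonpos_of_nonpos_of_nonneg
                  · rw [hvR0]; have := hvnn k ((R k).erase j); linarith
                  · exact (hvbpos k hk _).le
                calc ∑ j ∈ R k, _ ≤ (0:ℝ) := Finset.sum_nonpos h9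
                  _ ≤ 1 := zero_le_one
      calc (∏ j ∈ R k, ((v k {ℓ k} + v k (R k)) / (v k {ℓ k} + v k ((R k).erase j)))) ^ (w k)
          ≤ (Real.exp 1) ^ (w k) := by
            apply Real.rpow_le_rpow _ h7 (hw k).le
            exact Finset.prod_nonneg (fun j _ => (div_pos (hvbpos k hk _) (hvbpos k hk _)).le)
        _ = Real.exp (w k) := Real.exp_one_rpow _
    have h10 : ∏ k ∈ Abar, ∏ j ∈ R k, L j ≤ ∏ k ∈ Abar, Real.exp (w k) := by
      apply Finset.prod_le_prod
      · intro k hk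
        apply Finset.prod_nonneg
        intro j hj
        have hjJ : j ∈ J := hRsub k hj
        exact le_trans zero_le_one (hL1 j hjJ)
      · exact h4
    have h11 : ∏ k ∈ Abar, Real.exp (w k) = Real.exp (∑ k ∈ Abar, w k) := (Real.exp_sum _ _).symm
    have h12 : ∑ k ∈ Abar, w k ≤ 1 := by
      rw [← hwsum]
      apply Finset.sum_le_sum_of_subset_of_nonneg (Finset.subset_univ _)
      intro i _ _; exact (hw i).le
    calc ∏ i ∈ Abar, ∏ j ∈ Q i, L j = ∏ j ∈ Abar.biUnion Q, L j := h1
      _ ≤ ∏ j ∈ J, L j := h2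
      _ = ∏ k ∈ Abar, ∏ j ∈ R k, L j := h3
      _ ≤ ∏ k ∈ Abar, Real.exp (w k) := h10
      _ = Real.exp (∑ k ∈ Abar, w k) := h11
      _ ≤ Real.exp 1 := Real.exp_le_exp.mpr h12
  -- final combination
  calc ∏ i ∈ Abar, ((c i + v i (Q i)) / (c i + v i (R i))) ^ w i
      ≤ ∏ i ∈ Abar, ∏ j ∈ Q i, ((1 + ε') * L j) := hmain
    _ = (∏ i ∈ Abar, ∏ j ∈ Q i, (1 + ε')) * (∏ i ∈ Abar, ∏ j ∈ Q i, L j) := hsplit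
    _ ≤ (1 + ε') ^ m * Real.exp 1 := by
        apply mul_le_mul heps hLpart
        · apply Finset.prod_nonneg; intro i hi
          apply Finset.prod_nonneg; intro j hj
          exact le_trans zero_le_one (hL1 j (hQsub i hj))
        · positivity
    _ = Real.exp 1 * (1 + ε') ^ m := mul_comm _ _

end LL
lemma decomp {A : Type*} [Fintype A] [DecidableEq A]
    (w : A → ℝ) (hw : ∀ i, 0 < w i)
    (N Z : A → ℝ) (Y : A → A → ℝ)
    (hN : ∀ i, 0 ≤ N i) (hY : ∀ i k, 0 ≤ Y i k) (hZ0 : ∀ i, 0 ≤ Z i)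
    (hZY : ∀ i, Z i ≤ Y i i)
    (π : A → A) (D₀ : Finset A)
    (hinj : Set.InjOn π D₀)
    (hb : ∀ i ∈ D₀, N i ≤ Y i (π i))
    (hchain : ∀ (l : List A) (hl : l ≠ []) (k : A), l.Nodup → (∀ x ∈ l, x ∈ D₀) →
      l.Chain' (fun a b => π a = b) → π (l.getLast hl) = k → k ∉ D₀ →
      ¬(∀ j, N k ≤ Y k j) →
      (∏ x ∈ l.toFinset, N x ^ w x) * N k ^ w k ≤
        (∏ x ∈ l.toFinset, Z x ^ w x) * Z k ^ w k) :
    ∀ (D : Finset A), D ⊆ D₀ → (∀ d ∈ D, π d ∈ D₀ → π d ∈ D) →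
    ∃ σ : Equiv.Perm A,
      (∀ x, x ∉ D ∪ D.image π → σ x = x) ∧
      ∏ x ∈ D ∪ D.image π, N x ^ w x ≤ ∏ x ∈ D ∪ D.image π, Y x (σ x) ^ w x := by
  classical
  suffices key : ∀ (n : ℕ) (D : Finset A), D.card ≤ n → D ⊆ D₀ →
      (∀ d ∈ D, π d ∈ D₀ → π d ∈ D) →
      ∃ σ : Equiv.Perm A,
        (∀ x, x ∉ D ∪ D.image π → σ x = x) ∧
        ∏ x ∈ D ∪ D.image π, N x ^ w x ≤ ∏ x ∈ D ∪ D.image π, Y x (σ x) ^ w x by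
    intro D hD hinv; exact key D.card D le_rfl hD hinv
  intro n
  induction n with
  | zero =>
    intro D hcard _ _
    have hD : D = ∅ := Finset.card_eq_zero.mp (Nat.le_zero.mp hcard)
    subst hD
    exact ⟨1, fun x _ => rfl, by simp⟩
  | succ n ih =>
    intro D hcard hD hinv
    rcases Finset.eq_empty_or_nonempty D with hDe | hDne
    · subst hDe; exact ⟨1, fun x _ => rfl, by simp⟩
    by_cases hhead : ∃ i₀ ∈ D, i₀ ∉ D.image π
    · -- case (i): there is a chain head
      obtain ⟨i₀, hi₀D, hi₀im⟩ := hhead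
      -- injectivity of iterates
      have keyinj : ∀ a b, a < b → (∀ t, t < b → π^[t] i₀ ∈ D) → π^[a] i₀ ≠ π^[b] i₀ := by
        intro a
        induction a using Nat.strong_induction_on with
        | _ a iha =>
          intro b hab hall heq
          rcases Nat.eq_zero_or_pos a with rfl | hapos
          · have hb1 : b - 1 + 1 = b := Nat.succ_pred_eq_of_pos hab
            have hiter : π^[b] i₀ = π (π^[b-1] i₀) := by
              conv_lhs => rw [← hb1, Function.iterate_succ_apply' π (b-1) i₀]
            apply hi₀im
            rw [Finset.mem_image]
            refine ⟨π^[b-1] i₀, hall _ (by omega), ?_⟩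
            rw [← hiter, ← heq]; simp
          · have ha1 : a - 1 + 1 = a := Nat.succ_pred_eq_of_pos hapos
            have hb1 : b - 1 + 1 = b := Nat.succ_pred_eq_of_pos (show 0 < b by omega)
            have hiterA : π^[a] i₀ = π (π^[a-1] i₀) := by
              conv_lhs => rw [← ha1, Function.iterate_succ_apply' π (a-1) i₀]
            have hiterB : π^[b] i₀ = π (π^[b-1] i₀) := by
              conv_lhs => rw [← hb1, Function.iterate_succ_apply' π (b-1) i₀]
            have hmemA : π^[a-1] i₀ ∈ D₀ := hD (hall _ (by omega))
            have hmemB : π^[b-1] i₀ ∈ D₀ := hD (hall _ (by omega))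
            have heq2 : π^[a-1] i₀ = π^[b-1] i₀ := by
              apply hinj hmemA hmemB
              rw [← hiterA, ← hiterB]; exact heq
            exact iha (a-1) (by omega) (b-1) (by omega)
              (fun t ht => hall t (by omega)) heq2
      have hex : ∃ t, π^[t] i₀ ∉ D := by
        by_contra hall
        push_neg at hall
        have hfninj : Function.Injective (fun t : Fin (D.card + 1) => π^[(t : ℕ)] i₀) := by
          intro a b hab
          by_contra hne
          rcases Ne.lt_or_gt (fun h : (a:ℕ) = (b:ℕ) => hne (Fin.ext h)) with h | h
          · exact keyinj a b h (fun t _ => hall t) hab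
          · exact keyinj b a h (fun t _ => hall t) hab.symm
        have hle := Finset.card_le_card_of_injOn
          (s := (Finset.univ : Finset (Fin (D.card + 1)))) (t := D)
          (fun t : Fin (D.card + 1) => π^[(t:ℕ)] i₀)
          (fun t _ => hall t) (Function.Injective.injOn hfninj)
        simp only [Finset.card_univ, Fintype.card_fin] at hle
        omega
      set nn := Nat.find hex with hnn
      have hkD : π^[nn] i₀ ∉ D := Nat.find_spec hex
      have hmem : ∀ t, t < nn → π^[t] i₀ ∈ D := by
        intro t ht
        by_contra h
        exact Nat.find_min hex ht h
      have hnn0 : 0 < nn := by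
        rcases Nat.eq_zero_or_pos nn with h | h
        · exfalso; apply hkD; rw [h]; simpa using hi₀D
        · exact h
      set l : List A := (List.range nn).map (fun t => π^[t] i₀) with hl_def
      set k := π^[nn] i₀ with hk_def
      have hllen : l.length = nn := by simp [hl_def]
      have hlget : ∀ (t : ℕ) (ht : t < l.length), l[t] = π^[t] i₀ := by
        intro t ht; simp [hl_def]
      have hlne : l ≠ [] := by
        apply List.ne_nil_of_length_pos; rw [hllen]; exact hnn0
      have hmeml : ∀ x, x ∈ l ↔ ∃ t, t < nn ∧ π^[t] i₀ = x := by
        intro x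
        constructor
        · intro hx
          obtain ⟨t, ht, h⟩ := List.mem_map.mp (hl_def ▸ hx)
          exact ⟨t, List.mem_range.mp ht, h⟩
        · rintro ⟨t, ht, h⟩
          rw [hl_def]
          exact List.mem_map.mpr ⟨t, List.mem_range.mpr ht, h⟩
      have hlD : ∀ x ∈ l, x ∈ D := by
        intro x hx; obtain ⟨t, ht, rfl⟩ := (hmeml x).mp hx; exact hmem t ht
      have hlnodup : l.Nodup := by
        rw [hl_def]
        apply List.Nodup.map_on _ List.nodup_range
        intro a ha b hb hab
        simp only [List.mem_range] at ha hb
        by_contra hne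
        rcases Ne.lt_or_gt hne with h | h
        · exact keyinj a b h (fun t ht => hmem t (by omega)) hab
        · exact keyinj b a h (fun t ht => hmem t (by omega)) hab.symm
      have hchain' : l.Chain' (fun a b => π a = b) := by
        apply List.isChain_iff_getElem.mpr
        intro t ht
        rw [hlget t (by omega), hlget (t+1) (by omega)]
        exact (Function.iterate_succ_apply' π t i₀).symm
      have hlast : l.getLast hlne = π^[nn-1] i₀ := by
        rw [List.getLast_eq_getElem, hlget _ (by omega), hllen]
      have hplast : π (l.getLast hlne) = k := by
        rw [hlast, hk_def, ← Function.iterate_succ_apply' π (nn-1) i₀]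
        congr 1; omega
      have hknl : k ∉ l := fun h => hkD (hlD k h)
      -- component and remainder
      set comp : Finset A := insert k l.toFinset with hcomp_def
      set D' := D \ l.toFinset with hD'_def
      have hi₀l : i₀ ∈ l := (hmeml i₀).mpr ⟨0, hnn0, rfl⟩
      have hD'card : D'.card ≤ n := by
        have hlt : D'.card < D.card := by
          apply Finset.card_lt_card
          constructor
          · exact Finset.sdiff_subset
          · intro hsub
            have := hsub hi₀D
            rw [hD'_def, Finset.mem_sdiff] at this
            exact this.2 (List.mem_toFinset.mpr hi₀l)
        omega
      have hD'sub : D' ⊆ D₀ := fun x hx => hD (Finset.mem_sdiff.mp hx).1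
      -- no D'-element maps into l or to k
      have hnotl : ∀ d ∈ D', π d ∉ comp := by
        intro d hd hpid
        rw [hD'_def, Finset.mem_sdiff] at hd
        rw [hcomp_def, Finset.mem_insert] at hpid
        rcases hpid with h | h
        · -- π d = k = π (π^[nn-1] i₀)
          have h2 : π d = π (π^[nn-1] i₀) := by
            rw [h, hk_def, ← Function.iterate_succ_apply' π (nn-1) i₀]
            congr 1; omega
          have : d = π^[nn-1] i₀ := hinj (hD hd.1) (hD (hmem _ (by omega))) h2
          apply hd.2
          rw [this]; exact List.mem_toFinset.mpr ((hmeml _).mpr ⟨nn-1, by omega, rfl⟩)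
        · obtain ⟨t, ht, hteq⟩ := (hmeml (π d)).mp (List.mem_toFinset.mp h)
          rcases Nat.eq_zero_or_pos t with rfl | htpos
          · simp only [Function.iterate_zero_apply] at hteq
            apply hi₀im
            rw [Finset.mem_image]; exact ⟨d, hd.1, hteq.symm⟩
          · have h2 : π (π^[t-1] i₀) = π d := by
              rw [← hteq, ← Function.iterate_succ_apply' π (t-1) i₀]
              congr 1; omega
            have : π^[t-1] i₀ = d := hinj (hD (hmem _ (by omega))) (hD hd.1) h2
            apply hd.2
            rw [← this]; exact List.mem_toFinset.mpr ((hmeml _).mpr ⟨t-1, by omega, rfl⟩)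
      have hinv' : ∀ d ∈ D', π d ∈ D₀ → π d ∈ D' := by
        intro d hd hd0
        have hdD : d ∈ D := (Finset.mem_sdiff.mp hd).1
        have hpD : π d ∈ D := hinv d hdD hd0
        rw [hD'_def, Finset.mem_sdiff]
        refine ⟨hpD, fun hc => hnotl d hd ?_⟩
        rw [hcomp_def]; exact Finset.mem_insert_of_mem hc
      obtain ⟨σ', hσ'fix, hσ'le⟩ := ih D' hD'card hD'sub hinv'
      set S := D ∪ D.image π with hS_def
      set S' := D' ∪ D'.image π with hS'_def
      have hdisj : Disjoint S' comp := by
        rw [Finset.disjoint_left]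
        intro x hxS' hxc
        rw [hS'_def, Finset.mem_union] at hxS'
        rcases hxS' with hx | hx
        · rw [hcomp_def, Finset.mem_insert] at hxc
          rcases hxc with rfl | hxl
          · exact hkD ((Finset.mem_sdiff.mp hx).1)
          · exact (Finset.mem_sdiff.mp hx).2 hxl
        · rw [Finset.mem_image] at hx
          obtain ⟨d, hd, rfl⟩ := hx
          exact hnotl d hd hxc
      have hScomp : S = S' ∪ comp := by
        apply Finset.Subset.antisymm
        · intro x hx
          rw [hS_def, Finset.mem_union] at hx
          rw [Finset.mem_union]
          rcases hx with hx | hx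
          · by_cases hxl : x ∈ l.toFinset
            · right; rw [hcomp_def]; exact Finset.mem_insert_of_mem hxl
            · left; rw [hS'_def, Finset.mem_union]; left
              rw [hD'_def, Finset.mem_sdiff]; exact ⟨hx, hxl⟩
          · rw [Finset.mem_image] at hx
            obtain ⟨d, hd, rfl⟩ := hx
            by_cases hdl : d ∈ l.toFinset
            · right
              obtain ⟨t, ht, rfl⟩ := (hmeml d).mp (List.mem_toFinset.mp hdl)
              have : π (π^[t] i₀) = π^[t+1] i₀ := (Function.iterate_succ_apply' π t i₀).symm
              rw [hcomp_def, this]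
              rcases Nat.lt_or_ge (t+1) nn with h | h
              · exact Finset.mem_insert_of_mem (List.mem_toFinset.mpr ((hmeml _).mpr ⟨t+1, h, rfl⟩))
              · have : t + 1 = nn := by omega
                rw [this]; exact Finset.mem_insert_self _ _
            · left; rw [hS'_def, Finset.mem_union]; right
              rw [Finset.mem_image]
              exact ⟨d, by rw [hD'_def, Finset.mem_sdiff]; exact ⟨hd, hdl⟩, rfl⟩
        · intro x hx
          rw [Finset.mem_union] at hx
          rw [hS_def, Finset.mem_union]
          rcases hx with hx | hx
          · rw [hS'_def, Finset.mem_union] at hx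
            rcases hx with hx | hx
            · left; exact (Finset.mem_sdiff.mp hx).1
            · right; rw [Finset.mem_image] at hx ⊢
              obtain ⟨d, hd, rfl⟩ := hx
              exact ⟨d, (Finset.mem_sdiff.mp hd).1, rfl⟩
          · rw [hcomp_def, Finset.mem_insert] at hx
            rcases hx with rfl | hx
            · right; rw [Finset.mem_image]
              refine ⟨π^[nn-1] i₀, hmem _ (by omega), ?_⟩
              rw [← Function.iterate_succ_apply' π (nn-1) i₀, hk_def]
              congr 1; omega
            · left; exact hlD x (List.mem_toFinset.mp hx)
      have hfixcomp : ∀ x ∈ comp, σ' x = x := by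
        intro x hx
        apply hσ'fix
        intro hc
        exact (Finset.disjoint_left.mp hdisj) hc hx
      have hσ'S' : ∀ x ∈ S', σ' x ∈ S' := by
        intro x hx
        by_contra hc
        have h1 : σ' (σ' x) = σ' x := hσ'fix _ hc
        have := σ'.injective h1
        rw [this] at hc; exact hc hx
      have hprodsplit : ∀ f : A → ℝ, ∏ x ∈ S, f x = (∏ x ∈ S', f x) * ∏ x ∈ comp, f x := by
        intro f; rw [hScomp, Finset.prod_union hdisj]
      by_cases hk : ∀ j, N k ≤ Y k j
      · -- case A: cyclic shift on the component
        have hlclen : (l ++ [k]).length = nn + 1 := by simp [hllen]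
        have hlcnodup : (l ++ [k]).Nodup := by
          rw [List.nodup_append]
          exact ⟨hlnodup, List.nodup_singleton k, fun a ha b hb hab => hknl (by rw [List.mem_singleton] at hb; rw [← hb, ← hab]; exact ha)⟩
        have hlcget : ∀ (t : ℕ) (ht : t < nn + 1),
            (l ++ [k])[t]'(by rw [hlclen]; exact ht) = π^[t] i₀ := by
          intro t ht
          rcases Nat.lt_or_ge t nn with h | h
          · rw [List.getElem_append_left (by rw [hllen]; omega)]
            exact hlget t (by rw [hllen]; omega)
          · have ht' : t = nn := by omega
            subst ht'
            rw [List.getElem_append_right (by rw [hllen])]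
            simp [hllen, hk_def]
        set σc := (l ++ [k]).formPerm with hσc_def
        have hσcl : ∀ t, t < nn → σc (π^[t] i₀) = π^[t+1] i₀ := by
          intro t ht
          rw [← hlcget t (by omega), hσc_def,
            List.formPerm_apply_getElem (l ++ [k]) hlcnodup t (by rw [hlclen]; omega)]
          have h2 := hlcget (t+1) (by omega)
          convert h2 using 2
          rw [hlclen, Nat.mod_eq_of_lt (by omega)]
        have hσck : σc k = i₀ := by
          rw [show k = (l ++ [k])[nn]'(by rw [hlclen]; omega) from (hlcget nn (by omega)).symm,
            hσc_def, List.formPerm_apply_getElem (l ++ [k]) hlcnodup nn (by rw [hlclen]; omega)]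
          have h2 := hlcget 0 (by omega)
          convert h2 using 2
          rw [hlclen, Nat.mod_self]
          rfl
        have hσcfix : ∀ x, x ∉ comp → σc x = x := by
          intro x hx
          apply List.formPerm_apply_of_notMem
          simp only [List.mem_append, List.mem_singleton]
          rw [hcomp_def, Finset.mem_insert] at hx
          push_neg at hx
          intro hc
          rcases hc with h | h
          · exact hx.2 (List.mem_toFinset.mpr h)
          · exact hx.1 h
        refine ⟨σ'.trans σc, ?_, ?_⟩
        · intro x hx
          rw [hScomp, Finset.mem_union] at hx
          push_neg at hx
          have h1 : σ' x = x := hσ'fix x hx.1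
          simp only [Equiv.trans_apply, h1]
          exact hσcfix x hx.2
        · rw [hprodsplit, hprodsplit]
          apply mul_le_mul
          · calc ∏ x ∈ S', N x ^ w x ≤ ∏ x ∈ S', Y x (σ' x) ^ w x := hσ'le
              _ = ∏ x ∈ S', Y x ((σ'.trans σc) x) ^ w x := by
                  apply Finset.prod_congr rfl
                  intro x hx
                  simp only [Equiv.trans_apply]
                  rw [hσcfix (σ' x) (fun hc => (Finset.disjoint_left.mp hdisj) (hσ'S' x hx) hc)]
          · apply Finset.prod_le_prod
            · intro x _; exact Real.rpow_nonneg (hN x) _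
            · intro x hx
              rw [hcomp_def, Finset.mem_insert] at hx
              rcases hx with rfl | hx
              · have h1 : (σ'.trans σc) k = i₀ := by
                  simp only [Equiv.trans_apply,
                    hfixcomp k (by rw [hcomp_def]; exact Finset.mem_insert_self _ _)]
                  exact hσck
                rw [h1]
                exact Real.rpow_le_rpow (hN k) (hk i₀) (hw k).le
              · obtain ⟨t, ht, rfl⟩ := (hmeml x).mp (List.mem_toFinset.mp hx)
                have h1 : (σ'.trans σc) (π^[t] i₀) = π (π^[t] i₀) := by
                  simp only [Equiv.trans_apply,
                    hfixcomp _ (by rw [hcomp_def]; exact Finset.mem_insert_of_mem hx)]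
                  rw [hσcl t ht]
                  exact Function.iterate_succ_apply' π t i₀
                rw [h1]
                exact Real.rpow_le_rpow (hN _) (hb _ (hD (hmem t ht))) (hw _).le
          · apply Finset.prod_nonneg; intro x _; exact Real.rpow_nonneg (hN x) _
          · apply Finset.prod_nonneg; intro x _; exact Real.rpow_nonneg (hY _ _) _
      · -- case B: identity on the component, use the chain inequality
        refine ⟨σ', ?_, ?_⟩
        · intro x hx
          rw [hScomp, Finset.mem_union] at hx
          push_neg at hx
          exact hσ'fix x hx.1
        · rw [hprodsplit, hprodsplit]
          apply mul_le_mul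
          · exact hσ'le
          · have hklast : π (π^[nn-1] i₀) = k := by
              rw [hk_def, ← Function.iterate_succ_apply' π (nn-1) i₀]
              congr 1; omega
            have hkD₀ : k ∉ D₀ := by
              intro hc
              have h1 := hinv (π^[nn-1] i₀) (hmem _ (by omega)) (by rw [hklast]; exact hc)
              rw [hklast] at h1; exact hkD h1
            have hknotin : k ∉ l.toFinset := fun hc => hknl (List.mem_toFinset.mp hc)
            have hc1 : (∏ x ∈ l.toFinset, N x ^ w x) * N k ^ w k ≤
                (∏ x ∈ l.toFinset, Z x ^ w x) * Z k ^ w k :=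
              hchain l hlne k hlnodup (fun x hx => hD (hlD x hx)) hchain' hplast hkD₀ hk
            calc ∏ x ∈ comp, N x ^ w x
                = (∏ x ∈ l.toFinset, N x ^ w x) * N k ^ w k := by
                  rw [hcomp_def, Finset.prod_insert hknotin, mul_comm]
              _ ≤ (∏ x ∈ l.toFinset, Z x ^ w x) * Z k ^ w k := hc1
              _ = ∏ x ∈ comp, Z x ^ w x := by
                  rw [hcomp_def, Finset.prod_insert hknotin, mul_comm]
              _ ≤ ∏ x ∈ comp, Y x (σ' x) ^ w x := by
                  apply Finset.prod_le_prod
                  · intro x _; exact Real.rpow_nonneg (hZ0 x) _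
                  · intro x hx
                    rw [hfixcomp x hx]
                    exact Real.rpow_le_rpow (hZ0 x) (hZY x) (hw x).le
          · apply Finset.prod_nonneg; intro x _; exact Real.rpow_nonneg (hN x) _
          · apply Finset.prod_nonneg; intro x _; exact Real.rpow_nonneg (hY _ _) _
    · -- case (ii): D ⊆ π(D), so π permutes D
      have hsub2 : D ⊆ D.image π := by
        intro x hx; by_contra h; exact hhead ⟨x, hx, h⟩
      have hinjD : Set.InjOn π D := hinj.mono (by exact_mod_cast hD)
      have hcardim : (D.image π).card = D.card := Finset.card_image_of_injOn hinjD
      have himeq : D.image π = D := by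
        apply (Finset.eq_of_subset_of_card_le hsub2 (le_of_eq hcardim)).symm
      have hmapsto : ∀ x ∈ D, π x ∈ D := by
        intro x hx; rw [← himeq]; exact Finset.mem_image_of_mem π hx
      set p : A → Prop := fun x => x ∈ D with hp_def
      have hpd : DecidablePred p := fun x => by rw [hp_def]; infer_instance
      set e0 : {x // p x} → {x // p x} := fun x => ⟨π x.1, hmapsto x.1 x.2⟩ with he0_def
      have he0inj : Function.Injective e0 := by
        intro a b hab
        rw [he0_def] at hab
        have := hinjD a.2 b.2 (Subtype.ext_iff.mp hab)
        exact Subtype.ext this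
      have he0bij : Function.Bijective e0 := Finite.injective_iff_bijective.mp he0inj
      set e := Equiv.ofBijective e0 he0bij with he_def
      set σ := @Equiv.Perm.extendDomain {x // p x} A e p hpd (Equiv.refl _) with hσ_def
      have hσD : ∀ x (hx : p x), σ x = π x := by
        intro x hx
        rw [hσ_def]
        rw [Equiv.Perm.extendDomain_apply_subtype e (Equiv.refl _) hx]
        simp [he_def, he0_def]
      have hσfix : ∀ x, ¬ p x → σ x = x := by
        intro x hx
        rw [hσ_def, Equiv.Perm.extendDomain_apply_not_subtype e (Equiv.refl _) hx]
      have hSD : D ∪ D.image π = D := by rw [himeq, Finset.union_self]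
      refine ⟨σ, ?_, ?_⟩
      · intro x hx; rw [hSD] at hx; exact hσfix x hx
      · rw [hSD]
        apply Finset.prod_le_prod
        · intro x _; exact Real.rpow_nonneg (hN x) _
        · intro x hx
          rw [hσD x hx]
          exact Real.rpow_le_rpow (hN x) (hb x (hD hx)) (hw x).le

/-- (Rematching, asymmetric case.)
Let `ε̄ ≥ 0`, `ε := (1+ε̄)^m − 1`, and let `R` be an `ε̄`-local optimum of `J` with
respect to the endowed valuations; `R_i = ∅` for `i ∉ Ā`. Then there exists a partial
matching `ρ : A → H ∪ {⊥}` such that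
`∏_{i∈A} v_i(R_i ∪ {ρ(i)})^{w_i} ≥ OPT / ((2 + n·w_max)·e·(1+ε))`. -/
theorem rematching_asymmetric {G A : Type*} [Fintype G] [DecidableEq G]
    [Fintype A] [DecidableEq A]
    (n m : ℕ) (hn : n = Fintype.card A) (hm : m = Fintype.card G)
    (hn1 : 1 ≤ n) (hnm : n ≤ m)
    (w : A → ℝ) (hw : ∀ i, 0 < w i) (hwsum : ∑ i, w i = 1)
    (wmax : ℝ) (hwmax : ∀ i, w i ≤ wmax) (hwmax' : ∃ i, w i = wmax)
    (v : A → Finset G → ℝ)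
    (hmono : ∀ i, ∀ S T : Finset G, S ⊆ T → v i S ≤ v i T)
    (hsubmod : ∀ i, ∀ S T : Finset G, v i (S ∩ T) + v i (S ∪ T) ≤ v i S + v i T)
    (hv0 : ∀ i, v i ∅ = 0)
    (OPT : ℝ) (hOPTpos : 0 < OPT)
    (hOPTub : ∀ P : A → Finset G, (∀ i k, i ≠ k → Disjoint (P i) (P k)) →
      Finset.univ.biUnion P = (univ : Finset G) →
      ∏ i, v i (P i) ^ (w i) ≤ OPT)
    (hOPTex : ∃ P : A → Finset G, (∀ i k, i ≠ k → Disjoint (P i) (P k)) ∧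
      Finset.univ.biUnion P = (univ : Finset G) ∧
      ∏ i, v i (P i) ^ (w i) = OPT)
    (τ : A → G) (hτinj : Function.Injective τ)
    (hτopt : ∀ τ' : A → G, Function.Injective τ' →
      ∏ i, v i {τ' i} ^ (w i) ≤ ∏ i, v i {τ i} ^ (w i))
    (H J : Finset G) (hH : H = Finset.univ.image τ) (hJ : J = univ \ H)
    (Abar : Finset A) (hAbar : Abar = univ.filter (fun i => 0 < v i J))
    (ℓ : A → G) (hℓ : ∀ i ∈ Abar, ℓ i ∈ J ∧ ∀ j ∈ J, v i {j} ≤ v i {ℓ i})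
    (vb : A → Finset G → ℝ) (hvb : ∀ i S, vb i S = v i {ℓ i} + v i S)
    (ε' ε : ℝ) (hε' : 0 ≤ ε') (hε : ε = (1 + ε') ^ m - 1)
    (R : A → Finset G)
    (hRsub : ∀ i, R i ⊆ J) (hRout : ∀ i ∉ Abar, R i = ∅)
    (hRdisj : ∀ i k, i ≠ k → Disjoint (R i) (R k))
    (hRcover : Abar.biUnion R = J)
    (hloc : ∀ i ∈ Abar, ∀ k ∈ Abar, i ≠ k → ∀ j ∈ R i,
      (vb i ((R i).erase j) / vb i (R i)) ^ (w i) *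
        (vb k (R k ∪ {j}) / vb k (R k)) ^ (w k) ≤ 1 + ε') :
    ∃ ρ : A → Option G,
      (∀ (i : A), ∀ g ∈ ρ i, g ∈ H) ∧
      (∀ (i k : A) (g : G), ρ i = some g → ρ k = some g → i = k) ∧
      OPT / ((2 + n * wmax) * Real.exp 1 * (1 + ε))
        ≤ ∏ i, v i (R i ∪ (ρ i).toFinset) ^ (w i) := by
  classical
  have hANe : Nonempty A := by
    rw [← Fintype.card_pos_iff, ← hn]; omega
  have hvnn : ∀ i (S : Finset G), 0 ≤ v i S := fun i S => v_nonneg (v i) (hmono i) (hv0 i) S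
  obtain ⟨O, hOdisj, hOcover, hOval⟩ := hOPTex
  -- each agent gets positive value in the optimum
  have hvOpos : ∀ i, 0 < v i (O i) := by
    intro i
    by_contra hc
    have h0 : v i (O i) = 0 := le_antisymm (not_lt.mp hc) (hvnn i _)
    have : (∏ k, v k (O k) ^ (w k)) = 0 :=
      Finset.prod_eq_zero (Finset.mem_univ i) (by rw [h0]; exact Real.zero_rpow (hw i).ne')
    rw [hOval] at this
    exact absurd this hOPTpos.ne'
  -- all matched singleton values are positive
  have hτpos : ∀ i, 0 < v i {τ i} := by
    have hgex : ∀ i, ∃ x, x ∈ O i ∧ 0 < v i {x} := by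
      intro i
      by_contra hcon
      push_neg at hcon
      have h1 := v_le_sum_singletons (v i) (hmono i) (hsubmod i) (hv0 i) (O i)
      have h2 : ∑ j ∈ O i, v i {j} ≤ 0 :=
        Finset.sum_nonpos (fun j hj => hcon j hj)
      linarith [hvOpos i]
    set g : A → G := fun i => (hgex i).choose with hg_def
    have hgmem : ∀ i, g i ∈ O i := fun i => (hgex i).choose_spec.1
    have hgpos : ∀ i, 0 < v i {g i} := fun i => (hgex i).choose_spec.2
    have hginj : Function.Injective g := by
      intro a b hab
      by_contra hne
      have hd := Finset.disjoint_left.mp (hOdisj a b hne) (hgmem a)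
      rw [hab] at hd
      exact hd (hgmem b)
    have hcomp := hτopt g hginj
    have hgpos' : 0 < ∏ i, v i {g i} ^ w i :=
      Finset.prod_pos (fun i _ => Real.rpow_pos_of_pos (hgpos i) _)
    intro i
    by_contra hc
    have h0 : v i {τ i} = 0 := le_antisymm (not_lt.mp hc) (hvnn i _)
    have hz : (∏ k, v k {τ k} ^ w k) = 0 :=
      Finset.prod_eq_zero (Finset.mem_univ i) (by rw [h0]; exact Real.zero_rpow (hw i).ne')
    rw [hz] at hcomp
    linarith
  -- basic H/J facts
  have hτH : ∀ i, τ i ∈ H := by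
    intro i; rw [hH]; exact Finset.mem_image_of_mem τ (Finset.mem_univ i)
  have hJH : ∀ x ∈ J, x ∉ H := by
    intro x hx; rw [hJ, Finset.mem_sdiff] at hx; exact hx.2
  have hJHcov : ∀ x, x ∈ J ∨ x ∈ H := by
    intro x
    by_cases hx : x ∈ H
    · right; exact hx
    · left; rw [hJ, Finset.mem_sdiff]; exact ⟨Finset.mem_univ x, hx⟩
  -- ℓ values are positive on Abar
  have hℓpos : ∀ i ∈ Abar, 0 < v i {ℓ i} := by
    intro i hi
    have hiJ : 0 < v i J := by
      rw [hAbar] at hi; exact (Finset.mem_filter.mp hi).2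
    by_contra hc
    push_neg at hc
    have h1 := v_le_sum_singletons (v i) (hmono i) (hsubmod i) (hv0 i) J
    have h2 : ∑ j ∈ J, v i {j} ≤ 0 :=
      Finset.sum_nonpos (fun j hj => le_trans ((hℓ i (by rwa [hAbar] at hi ⊢ )).2 j hj) hc)
    linarith
  -- the endowment is dominated by the matched item (pointwise)
  have hℓτ : ∀ i ∈ Abar, v i {ℓ i} ≤ v i {τ i} := by
    intro i hi
    have hℓJ : ℓ i ∈ J := (hℓ i hi).1
    have hτ'inj : Function.Injective (Function.update τ i (ℓ i)) := by
      intro x y hxy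
      rw [Function.update_apply, Function.update_apply] at hxy
      split_ifs at hxy with h1 h2 h2
      · rw [h1, h2]
      · exfalso
        apply hJH _ hℓJ
        rw [hxy]
        exact hτH y
      · exfalso
        apply hJH _ hℓJ
        rw [← hxy]
        exact hτH x
      · exact hτinj hxy
    have hcomp := hτopt _ hτ'inj
    have hcan := prod_cancel_off (fun x => v x {Function.update τ i (ℓ i) x} ^ w x)
      (fun x => v x {τ x} ^ w x) {i}
      (fun x hx => by
        simp only [Function.update_of_ne (show x ≠ i by simpa using hx)])
      (fun x _ => Real.rpow_pos_of_pos (hτpos x) _) hcomp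
    rw [Finset.prod_singleton, Finset.prod_singleton, Function.update_self] at hcan
    by_contra hcon
    push_neg at hcon
    have := Real.rpow_lt_rpow (hvnn i _) hcon (hw i)
    linarith
  -- definitions
  set Q : A → Finset G := fun i => O i ∩ J with hQ_def
  set T : A → Finset G := fun i => O i ∩ H with hT_def
  set t : A → ℕ := fun i => (T i).card with ht_def
  have hhex : ∀ i, ∃ x, x ∈ H ∧ ((T i).Nonempty →
      (x ∈ T i ∧ ∀ y ∈ T i, v i {y} ≤ v i {x})) ∧ (¬(T i).Nonempty → x = τ i) := by
    intro i
    by_cases hne : (T i).Nonempty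
    · obtain ⟨b, hb, hbmax⟩ := Finset.exists_max_image (T i) (fun y => v i {y}) hne
      refine ⟨b, ?_, fun _ => ⟨hb, hbmax⟩, fun h => absurd hne h⟩
      rw [hT_def] at hb
      exact (Finset.mem_inter.mp hb).2
    · exact ⟨τ i, hτH i, fun h => absurd h hne, fun _ => rfl⟩
  set h : A → G := fun i => (hhex i).choose with hh_def
  have hhH : ∀ i, h i ∈ H := fun i => (hhex i).choose_spec.1
  have hhT : ∀ i, (T i).Nonempty → (h i ∈ T i ∧ ∀ y ∈ T i, v i {y} ≤ v i {h i}) :=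
    fun i => (hhex i).choose_spec.2.1
  have hhτ : ∀ i, ¬(T i).Nonempty → h i = τ i := fun i => (hhex i).choose_spec.2.2
  have hπex : ∀ i, ∃ k, τ k = h i := by
    intro i
    have := hhH i
    rw [hH, Finset.mem_image] at this
    obtain ⟨k, _, hk⟩ := this
    exact ⟨k, hk⟩
  set π : A → A := fun i => (hπex i).choose with hπ_def
  have hπτ : ∀ i, τ (π i) = h i := fun i => (hπex i).choose_spec
  set vl' : A → ℝ := fun i => if i ∈ Abar then v i {ℓ i} else 0 with hvl'_def
  set vh' : A → ℝ := fun i => if (T i).Nonempty then v i {h i} else 0 with hvh'_def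
  set M : A → ℝ := fun i => max (vl' i) (max (vh' i) (v i (R i))) with hM_def
  set c : A → ℝ := fun i => vl' i + (t i : ℝ) * vh' i with hc_def
  set s : A → ℝ := fun i => c i + v i (R i) with hs_def
  set D : Finset A := univ.filter (fun i => vl' i < vh' i ∧ v i (R i) < vh' i) with hD_def
  have hvl'nn : ∀ i, 0 ≤ vl' i := by
    intro i; rw [hvl'_def]
    dsimp only
    split <;> [exact (hvnn _ _); exact le_rfl]
  have hvh'nn : ∀ i, 0 ≤ vh' i := by
    intro i; rw [hvh'_def]
    dsimp only
    split <;> [exact (hvnn _ _); exact le_rfl]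
  have hMnn : ∀ i, 0 ≤ M i := fun i => le_trans (hvl'nn i) (le_max_left _ _)
  have hcnn : ∀ i, 0 ≤ c i := by
    intro i; rw [hc_def]
    have : (0:ℝ) ≤ (t i : ℝ) * vh' i := mul_nonneg (Nat.cast_nonneg _) (hvh'nn i)
    dsimp only
    linarith [hvl'nn i]
  have hsnn : ∀ i, 0 ≤ s i := by
    intro i; rw [hs_def]; dsimp only; linarith [hcnn i, hvnn i (R i)]
  -- the key value bound for the optimum
  have hvO : ∀ i, v i (O i) ≤ v i (Q i) + (t i : ℝ) * vh' i := by
    intro i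
    have hOsplit : O i = Q i ∪ T i := by
      rw [hQ_def, hT_def]
      ext x
      simp only [Finset.mem_union, Finset.mem_inter]
      constructor
      · intro hx
        rcases hJHcov x with hh | hh
        · left; exact ⟨hx, hh⟩
        · right; exact ⟨hx, hh⟩
      · rintro (⟨hx, _⟩ | ⟨hx, _⟩) <;> exact hx
    have h1 : v i (O i) ≤ v i (Q i) + ∑ x ∈ T i, v i {x} := by
      conv_lhs => rw [hOsplit]
      exact union_le_add_sum (v i) (hmono i) (hsubmod i) (hv0 i) (Q i) (T i)
    have h2 : ∑ x ∈ T i, v i {x} ≤ (t i : ℝ) * vh' i := by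
      by_cases hne : (T i).Nonempty
      · have hb := (hhT i hne).2
        have h3 : ∑ x ∈ T i, v i {x} ≤ ∑ _x ∈ T i, v i {h i} :=
          Finset.sum_le_sum (fun x hx => hb x hx)
        rw [Finset.sum_const, nsmul_eq_mul] at h3
        have h4 : vh' i = v i {h i} := by simp only [hvh'_def, if_pos hne]
        rw [h4]
        exact h3
      · rw [Finset.not_nonempty_iff_eq_empty] at hne
        have h5 : t i = 0 := by simp only [ht_def, hne, Finset.card_empty]
        rw [hne, h5]
        simp
    linarith
  have hQ0 : ∀ i ∉ Abar, v i (Q i) = 0 := by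
    intro i hi
    have h1 : v i J ≤ 0 := by
      rw [hAbar] at hi
      simp only [Finset.mem_filter, Finset.mem_univ, true_and, not_lt] at hi
      exact hi
    have h2 : v i (Q i) ≤ v i J := hmono i _ _ (by rw [hQ_def]; exact Finset.inter_subset_right)
    exact le_antisymm (by linarith) (hvnn i _)
  -- Theta
  set Θ : A → ℝ := fun i => if i ∈ Abar then (c i + v i (Q i)) / (c i + v i (R i)) else 1
    with hΘ_def
  have hΘnn : ∀ i, 0 ≤ Θ i := by
    intro i; rw [hΘ_def]
    dsimp only
    split
    · exact div_nonneg (by linarith [hcnn i, hvnn i (Q i)]) (by linarith [hcnn i, hvnn i (R i)])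
    · exact zero_le_one
  have hcℓ : ∀ i ∈ Abar, v i {ℓ i} ≤ c i := by
    intro i hi
    have h1 : vl' i = v i {ℓ i} := by simp only [hvl'_def, if_pos hi]
    have h2 : (0:ℝ) ≤ (t i : ℝ) * vh' i := mul_nonneg (Nat.cast_nonneg _) (hvh'nn i)
    simp only [hc_def]
    linarith [h1.ge]
  have hOΘs : ∀ i, v i (O i) ≤ Θ i * s i := by
    intro i
    by_cases hi : i ∈ Abar
    · have hden : 0 < c i + v i (R i) := by
        have := hℓpos i hi
        have := hcℓ i hi
        linarith [hvnn i (R i)]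
      have hΘs : Θ i * s i = c i + v i (Q i) := by
        simp only [hΘ_def, if_pos hi, hs_def]
        rw [div_mul_cancel₀ _ hden.ne']
      rw [hΘs]
      have h6 := hvO i
      have hcge : (t i : ℝ) * vh' i ≤ c i := by
        simp only [hc_def]
        linarith [hvl'nn i]
      linarith
    · have hΘ1 : Θ i = 1 := by simp only [hΘ_def, if_neg hi]
      rw [hΘ1, one_mul]
      have h6 := hvO i
      rw [hQ0 i hi] at h6
      have hvl0 : vl' i = 0 := by simp only [hvl'_def, if_neg hi]
      simp only [hs_def, hc_def]
      linarith [hvnn i (R i), hvl'nn i]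
  -- local optimality product bound (Lemma L)
  have hloc2 : ∀ i ∈ Abar, ∀ k ∈ Abar, i ≠ k → ∀ j ∈ R i,
      ((v i {ℓ i} + v i ((R i).erase j)) / (v i {ℓ i} + v i (R i))) ^ (w i) *
        ((v k {ℓ k} + v k (R k ∪ {j})) / (v k {ℓ k} + v k (R k))) ^ (w k) ≤ 1 + ε' := by
    intro i hi k hk hne j hj
    have h0 := hloc i hi k hk hne j hj
    rwa [hvb, hvb, hvb, hvb] at h0
  have hJm : J.card ≤ m := by
    rw [hm]
    calc J.card ≤ (univ : Finset G).card := Finset.card_le_card (Finset.subset_univ J)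
      _ = Fintype.card G := Finset.card_univ
  have hQsub : ∀ i, Q i ⊆ J := fun i => by rw [hQ_def]; exact Finset.inter_subset_right
  have hQO : ∀ i, Q i ⊆ O i := fun i => by rw [hQ_def]; exact Finset.inter_subset_left
  have hQdisj : ∀ i k, i ≠ k → Disjoint (Q i) (Q k) := fun i k hne =>
    Finset.disjoint_of_subset_left (hQO i)
      (Finset.disjoint_of_subset_right (hQO k) (hOdisj i k hne))
  have hLem : ∏ i ∈ Abar, Θ i ^ w i ≤ Real.exp 1 * (1 + ε') ^ m := by
    have heq : ∀ i ∈ Abar, Θ i ^ w i = ((c i + v i (Q i)) / (c i + v i (R i))) ^ w i := by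
      intro i hi; simp only [hΘ_def, if_pos hi]
    rw [Finset.prod_congr rfl heq]
    exact lemmaL w hw hwsum v hmono hsubmod hv0 J Abar ℓ hℓpos (fun i hi => (hℓ i hi).2)
      ε' hε' m hJm R hRsub hRdisj hRcover hloc2 Q hQsub hQdisj c hcℓ
  have hΘprod : ∏ i, Θ i ^ w i ≤ Real.exp 1 * (1 + ε') ^ m := by
    have hsub : ∏ i, Θ i ^ w i = ∏ i ∈ Abar, Θ i ^ w i := by
      symm
      apply Finset.prod_subset (Finset.subset_univ _)
      intro x _ hx
      simp only [hΘ_def, if_neg hx, Real.one_rpow]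
    rw [hsub]; exact hLem
  -- AM-GM part
  have hwmaxpos : 0 < wmax := lt_of_lt_of_le (hw (Classical.arbitrary A)) (hwmax _)
  have hAMGM : ∏ i, ((2 + (t i : ℝ)) : ℝ) ^ w i ≤ 2 + n * wmax := by
    have h1 := Real.geom_mean_le_arith_mean_weighted univ w (fun i => 2 + (t i : ℝ))
      (fun i _ => (hw i).le) hwsum (fun i _ => by positivity)
    refine h1.trans ?_
    have h2 : ∑ i, w i * (2 + (t i:ℝ)) = 2 * (∑ i, w i) + ∑ i, w i * (t i:ℝ) := by
      rw [Finset.mul_sum, ← Finset.sum_add_distrib]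
      apply Finset.sum_congr rfl; intro i _; ring
    have h3 : ∑ i, w i * (t i:ℝ) ≤ wmax * ∑ i, (t i:ℝ) := by
      rw [Finset.mul_sum]
      apply Finset.sum_le_sum
      intro i _
      exact mul_le_mul_of_nonneg_right (hwmax i) (Nat.cast_nonneg _)
    have hTO : ∀ i, T i ⊆ O i := fun i => by rw [hT_def]; exact Finset.inter_subset_left
    have hTdisj : ∀ i ∈ (univ : Finset A), ∀ k ∈ (univ : Finset A), i ≠ k →
        Disjoint (T i) (T k) :=
      fun i _ k _ hne => Finset.disjoint_of_subset_left (hTO i)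
        (Finset.disjoint_of_subset_right (hTO k) (hOdisj i k hne))
    have h4 : ∑ i, (t i : ℝ) ≤ (n : ℝ) := by
      have h5 : ∑ i, t i = (univ.biUnion T).card := by
        rw [Finset.card_biUnion hTdisj]
      have h6 : (univ.biUnion T) ⊆ H := by
        intro x hx
        rw [Finset.mem_biUnion] at hx
        obtain ⟨i, _, hxi⟩ := hx
        rw [hT_def] at hxi
        exact (Finset.mem_inter.mp hxi).2
      have h7 : H.card = n := by
        rw [hH, Finset.card_image_of_injective _ hτinj, Finset.card_univ, hn]
      calc ∑ i, (t i:ℝ) = ((∑ i, t i : ℕ) : ℝ) := by rw [Nat.cast_sum]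
        _ ≤ (H.card : ℝ) := by
            rw [h5]; exact_mod_cast Finset.card_le_card h6
        _ = n := by rw [h7]
    have h8 : wmax * (∑ i, (t i:ℝ)) ≤ wmax * n := mul_le_mul_of_nonneg_left h4 hwmaxpos.le
    calc ∑ i, w i * (2 + (t i:ℝ)) = 2 * (∑ i, w i) + ∑ i, w i * (t i:ℝ) := h2
      _ ≤ 2 * 1 + wmax * (n:ℝ) := by rw [hwsum]; linarith
      _ = 2 + n * wmax := by ring
  have hsM : ∀ i, s i ≤ (2 + (t i : ℝ)) * M i := by
    intro i
    have h1 : vl' i ≤ M i := by simp only [hM_def]; exact le_max_left _ _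
    have h2 : vh' i ≤ M i := by
      simp only [hM_def]; exact le_trans (le_max_left _ _) (le_max_right _ _)
    have h3 : v i (R i) ≤ M i := by
      simp only [hM_def]; exact le_trans (le_max_right _ _) (le_max_right _ _)
    have h4 : (t i:ℝ) * vh' i ≤ (t i:ℝ) * M i :=
      mul_le_mul_of_nonneg_left h2 (Nat.cast_nonneg _)
    simp only [hs_def, hc_def]
    nlinarith [hMnn i]
  -- the matching part (decomposition)
  have hmatch : ∃ σ : Equiv.Perm A,
      ∏ i, M i ^ w i ≤ ∏ i, v i (R i ∪ {τ (σ i)}) ^ w i := by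
    have hDT : ∀ i ∈ D, (T i).Nonempty := by
      intro i hi
      rw [hD_def, Finset.mem_filter] at hi
      by_contra hne
      have h0 : vh' i = 0 := by simp only [hvh'_def, if_neg hne]
      have h1 := hi.2.2
      rw [h0] at h1
      exact absurd h1 (not_lt.mpr (hvnn i _))
    have hDh : ∀ i ∈ D, h i ∈ T i := fun i hi => (hhT i (hDT i hi)).1
    have hMD : ∀ i ∈ D, M i = vh' i := by
      intro i hi
      rw [hD_def, Finset.mem_filter] at hi
      obtain ⟨-, h1, h2⟩ := hi
      simp only [hM_def]
      rw [max_eq_left h2.le, max_eq_right h1.le]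
    have hTO : ∀ i, T i ⊆ O i := fun i => by rw [hT_def]; exact Finset.inter_subset_left
    have hinjD : Set.InjOn π (↑D : Set A) := by
      intro a ha b hb hab
      have ha' : a ∈ D := ha
      have hb' : b ∈ D := hb
      have h1 : h a = h b := by rw [← hπτ a, ← hπτ b, hab]
      by_contra hne
      have h2 := Finset.disjoint_left.mp (hOdisj a b hne) (hTO a (hDh a ha'))
      apply h2
      apply hTO b
      rw [h1]
      exact hDh b hb'
    have hbD : ∀ i ∈ D, M i ≤ v i (R i ∪ {τ (π i)}) := by
      intro i hi
      rw [hMD i hi]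
      have h0 : vh' i = v i {h i} := by simp only [hvh'_def, if_pos (hDT i hi)]
      rw [h0, hπτ i]
      apply hmono
      rw [Finset.singleton_subset_iff]
      exact Finset.mem_union_right _ (Finset.mem_singleton_self _)
    have hchainD : ∀ (l : List A) (hl : l ≠ []) (k : A), l.Nodup → (∀ x ∈ l, x ∈ D) →
        l.Chain' (fun a b => π a = b) → π (l.getLast hl) = k → k ∉ D →
        ¬(∀ j, M k ≤ v k (R k ∪ {τ j})) →
        (∏ x ∈ l.toFinset, M x ^ w x) * M k ^ w k ≤
          (∏ x ∈ l.toFinset, v x {τ x} ^ w x) * v k {τ k} ^ w k := by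
      intro l hl k hnodup hlD hchainl hlast hkD hky
      have hkR : ¬ (M k ≤ v k (R k)) := by
        intro hc
        apply hky
        intro j
        exact le_trans hc (hmono k _ _ Finset.subset_union_left)
      have hkD' : ¬(vl' k < vh' k ∧ v k (R k) < vh' k) := by
        intro hc
        exact hkD (by rw [hD_def, Finset.mem_filter]; exact ⟨Finset.mem_univ k, hc⟩)
      have hMk : M k = vl' k := by
        have hMge : v k (R k) < M k := not_le.mp hkR
        rcases le_or_gt (vh' k) (v k (R k)) with h2 | h2
        · simp only [hM_def] at hMge ⊢
          rw [max_eq_right h2] at hMge ⊢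
          rcases max_cases (vl' k) (v k (R k)) with ⟨he, _⟩ | ⟨he, _⟩
          · exact he
          · rw [he] at hMge; exact absurd hMge (lt_irrefl _)
        · have hcase : ¬ (vl' k < vh' k) := fun hc => hkD' ⟨hc, h2⟩
          simp only [hM_def]
          rw [max_eq_left h2.le, max_eq_left (not_lt.mp hcase)]
      have hkAbar : k ∈ Abar := by
        by_contra hc
        have h0 : vl' k = 0 := by simp only [hvl'_def, if_neg hc]
        rw [hMk, h0] at hkR
        exact hkR (hvnn k _)
      have hMkℓ : M k = v k {ℓ k} := by rw [hMk]; simp only [hvl'_def, if_pos hkAbar]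
      have hMl : ∀ x ∈ l, M x = v x {h x} := by
        intro x hx
        have hxD := hlD x hx
        rw [hMD x hxD]
        simp only [hvh'_def, if_pos (hDT x hxD)]
      have hπl : ∀ x ∈ l, π x ∈ l ∨ π x = k := by
        intro x hx
        obtain ⟨idx, hidx, hxeq⟩ := List.mem_iff_getElem.mp hx
        rcases Nat.lt_or_ge idx (l.length - 1) with hlt | hge
        · left
          have hch := List.isChain_iff_getElem.mp hchainl idx (by omega)
          rw [hxeq] at hch
          rw [hch]
          exact List.getElem_mem _
        · right
          have hgl : l.getLast hl = x := by
            rw [← hxeq, List.getLast_eq_getElem]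
            congr 1
            omega
          rw [← hgl]
          exact hlast
      have hklJ : ℓ k ∈ J := (hℓ k hkAbar).1
      have hknl : k ∉ l := fun hc => hkD (hlD k hc)
      set τ2 : A → G := fun x => if x ∈ l then τ (π x) else if x = k then ℓ k else τ x
        with hτ2_def
      have hτ2inj : Function.Injective τ2 := by
        have hmainc : ∀ x y, τ2 x = τ2 y → x ∈ l → x = y := by
          intro x y hxy hx
          have hx2 : τ2 x = τ (π x) := by simp only [hτ2_def, if_pos hx]
          by_cases hy : y ∈ l
          · have hy2 : τ2 y = τ (π y) := by simp only [hτ2_def, if_pos hy]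
            rw [hx2, hy2] at hxy
            exact hinjD (Finset.mem_coe.mpr (hlD x hx)) (Finset.mem_coe.mpr (hlD y hy))
              (hτinj hxy)
          · by_cases hyk : y = k
            · exfalso
              have hy2 : τ2 y = ℓ k := by simp only [hτ2_def, if_neg hy, if_pos hyk]
              rw [hx2, hy2] at hxy
              exact hJH _ hklJ (by rw [← hxy]; exact hτH (π x))
            · have hy2 : τ2 y = τ y := by simp only [hτ2_def, if_neg hy, if_neg hyk]
              rw [hx2, hy2] at hxy
              have heq2 := hτinj hxy
              rcases hπl x hx with hin | hik
              · rw [heq2] at hin; exact absurd hin hy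
              · rw [heq2] at hik; exact absurd hik hyk
        intro x y hxy
        by_cases hx : x ∈ l
        · exact hmainc x y hxy hx
        by_cases hy : y ∈ l
        · exact (hmainc y x hxy.symm hy).symm
        by_cases hxk : x = k
        · by_cases hyk : y = k
          · rw [hxk, hyk]
          · exfalso
            have hx2 : τ2 x = ℓ k := by simp only [hτ2_def, if_neg hx, if_pos hxk]
            have hy2 : τ2 y = τ y := by simp only [hτ2_def, if_neg hy, if_neg hyk]
            rw [hx2, hy2] at hxy
            exact hJH _ hklJ (by rw [hxy]; exact hτH y)
        · by_cases hyk : y = k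
          · exfalso
            have hx2 : τ2 x = τ x := by simp only [hτ2_def, if_neg hx, if_neg hxk]
            have hy2 : τ2 y = ℓ k := by simp only [hτ2_def, if_neg hy, if_pos hyk]
            rw [hx2, hy2] at hxy
            exact hJH _ hklJ (by rw [← hxy]; exact hτH x)
          · have hx2 : τ2 x = τ x := by simp only [hτ2_def, if_neg hx, if_neg hxk]
            have hy2 : τ2 y = τ y := by simp only [hτ2_def, if_neg hy, if_neg hyk]
            rw [hx2, hy2] at hxy
            exact hτinj hxy
      have hcomp := hτopt τ2 hτ2inj
      have hknotin : k ∉ l.toFinset := fun hc => hknl (List.mem_toFinset.mp hc)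
      have hcan := prod_cancel_off (fun x => v x {τ2 x} ^ w x) (fun x => v x {τ x} ^ w x)
        (insert k l.toFinset)
        (fun x hx => by
          have hxl : x ∉ l := fun hc => hx (Finset.mem_insert_of_mem (List.mem_toFinset.mpr hc))
          have hxk : x ≠ k := fun hc => hx (by rw [hc]; exact Finset.mem_insert_self _ _)
          simp only [hτ2_def, if_neg hxl, if_neg hxk])
        (fun x _ => Real.rpow_pos_of_pos (hτpos x) _) hcomp
      rw [Finset.prod_insert hknotin, Finset.prod_insert hknotin] at hcan
      have hτ2k : τ2 k = ℓ k := by simp only [hτ2_def, if_neg hknl]; simp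
      have hLHS : (∏ x ∈ l.toFinset, M x ^ w x) * M k ^ w k =
          v k {τ2 k} ^ w k * ∏ x ∈ l.toFinset, v x {τ2 x} ^ w x := by
        rw [hτ2k, ← hMkℓ, mul_comm]
        congr 1
        apply Finset.prod_congr rfl
        intro x hx
        have hxl := List.mem_toFinset.mp hx
        have h2 : τ2 x = τ (π x) := by simp only [hτ2_def, if_pos hxl]
        rw [h2, hπτ, hMl x hxl]
      rw [hLHS]
      calc v k {τ2 k} ^ w k * ∏ x ∈ l.toFinset, v x {τ2 x} ^ w x
          ≤ v k {τ k} ^ w k * ∏ x ∈ l.toFinset, v x {τ x} ^ w x := hcan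
        _ = (∏ x ∈ l.toFinset, v x {τ x} ^ w x) * v k {τ k} ^ w k := mul_comm _ _
    have hdec := decomp w hw M (fun i => v i {τ i}) (fun i k => v i (R i ∪ {τ k}))
      hMnn (fun i k => hvnn i _) (fun i => hvnn i _)
      (fun i => hmono i _ _ (Finset.singleton_subset_iff.mpr
        (Finset.mem_union_right _ (Finset.mem_singleton_self _))))
      π D hinjD hbD hchainD D Finset.Subset.rfl (fun d hd hh => hh)
    obtain ⟨σ, hσfix, hσle⟩ := hdec
    refine ⟨σ, ?_⟩
    have hoffS : ∀ x, x ∉ D → M x ≤ v x (R x ∪ {τ x}) := by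
      intro x hxD
      have hxD' : ¬(vl' x < vh' x ∧ v x (R x) < vh' x) := by
        intro hc
        exact hxD (by rw [hD_def, Finset.mem_filter]; exact ⟨Finset.mem_univ x, hc⟩)
      have h1 : vl' x ≤ v x (R x ∪ {τ x}) := by
        by_cases hx : x ∈ Abar
        · have h2 : vl' x = v x {ℓ x} := by simp only [hvl'_def, if_pos hx]
          rw [h2]
          refine le_trans (hℓτ x hx) (hmono x _ _ ?_)
          rw [Finset.singleton_subset_iff]
          exact Finset.mem_union_right _ (Finset.mem_singleton_self _)
        · have h2 : vl' x = 0 := by simp only [hvl'_def, if_neg hx]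
          rw [h2]; exact hvnn x _
      have h3 : v x (R x) ≤ v x (R x ∪ {τ x}) := hmono x _ _ Finset.subset_union_left
      have h2 : vh' x ≤ v x (R x ∪ {τ x}) := by
        by_cases hcase : vl' x < vh' x
        · have h4 : vh' x ≤ v x (R x) := by
            by_contra h5
            exact hxD' ⟨hcase, lt_of_not_ge h5⟩
          exact le_trans h4 h3
        · exact le_trans (not_lt.mp hcase) h1
      simp only [hM_def]
      exact max_le h1 (max_le h2 h3)
    calc ∏ i, M i ^ w i
        = (∏ i ∈ D ∪ D.image π, M i ^ w i) * ∏ i ∈ (D ∪ D.image π)ᶜ, M i ^ w i :=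
          (Finset.prod_mul_prod_compl _ _).symm
      _ ≤ (∏ i ∈ D ∪ D.image π, v i (R i ∪ {τ (σ i)}) ^ w i) *
          ∏ i ∈ (D ∪ D.image π)ᶜ, v i (R i ∪ {τ (σ i)}) ^ w i := by
          apply mul_le_mul hσle ?_ ?_ ?_
          · apply Finset.prod_le_prod
            · intro x _; exact Real.rpow_nonneg (hMnn x) _
            · intro x hx
              have hxS := Finset.mem_compl.mp hx
              rw [hσfix x hxS]
              apply Real.rpow_le_rpow (hMnn x) _ (hw x).le
              exact hoffS x (fun hc => hxS (Finset.mem_union_left _ hc))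
          · exact Finset.prod_nonneg (fun x _ => Real.rpow_nonneg (hMnn x) _)
          · exact Finset.prod_nonneg (fun x _ => Real.rpow_nonneg (hvnn x _) _)
      _ = ∏ i, v i (R i ∪ {τ (σ i)}) ^ w i := Finset.prod_mul_prod_compl _ _
  obtain ⟨σ, hσ⟩ := hmatch
  -- final assembly
  refine ⟨fun i => some (τ (σ i)), ?_, ?_, ?_⟩
  · intro i g hg
    simp only [Option.mem_def, Option.some.injEq] at hg
    rw [← hg]; exact hτH _
  · intro i k g hi hk
    simp only [Option.some.injEq] at hi hk
    exact σ.injective (hτinj (hi.trans hk.symm))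
  · have hC1 : (0:ℝ) < 2 + n * wmax := by
      have h0 : (0:ℝ) ≤ (n:ℝ) * wmax := mul_nonneg (Nat.cast_nonneg _) hwmaxpos.le
      linarith
    have hεpos : (0:ℝ) < 1 + ε := by
      rw [hε]
      have h0 : (0:ℝ) < (1+ε')^m := by positivity
      linarith
    have hCpos : 0 < (2 + n * wmax) * Real.exp 1 * (1 + ε) :=
      mul_pos (mul_pos hC1 (Real.exp_pos 1)) hεpos
    rw [div_le_iff₀ hCpos]
    have hchain1 : OPT ≤ (∏ i, Θ i ^ w i) * ∏ i, s i ^ w i := by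
      rw [← hOval]
      calc ∏ i, v i (O i) ^ w i ≤ ∏ i, (Θ i * s i) ^ w i := by
            apply Finset.prod_le_prod
            · intro i _; exact Real.rpow_nonneg (hvnn i _) _
            · intro i _; exact Real.rpow_le_rpow (hvnn i _) (hOΘs i) (hw i).le
        _ = ∏ i, (Θ i ^ w i * s i ^ w i) := by
            apply Finset.prod_congr rfl; intro i _
            exact Real.mul_rpow (hΘnn i) (hsnn i)
        _ = (∏ i, Θ i ^ w i) * ∏ i, s i ^ w i := Finset.prod_mul_distrib
    have hchain2 : ∏ i, s i ^ w i ≤ (2 + n*wmax) * ∏ i, M i ^ w i := by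
      calc ∏ i, s i ^ w i ≤ ∏ i, ((2 + (t i:ℝ)) * M i) ^ w i := by
            apply Finset.prod_le_prod
            · intro i _; exact Real.rpow_nonneg (hsnn i) _
            · intro i _; exact Real.rpow_le_rpow (hsnn i) (hsM i) (hw i).le
        _ = ∏ i, ((2 + (t i:ℝ)) ^ w i * M i ^ w i) := by
            apply Finset.prod_congr rfl; intro i _
            exact Real.mul_rpow (by positivity) (hMnn i)
        _ = (∏ i, (2+(t i:ℝ))^ w i) * ∏ i, M i ^ w i := Finset.prod_mul_distrib
        _ ≤ (2 + n*wmax) * ∏ i, M i ^ w i := by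
            apply mul_le_mul_of_nonneg_right hAMGM
            exact Finset.prod_nonneg (fun i _ => Real.rpow_nonneg (hMnn i) _)
    have hMprodnn : (0:ℝ) ≤ ∏ i, M i ^ w i :=
      Finset.prod_nonneg (fun i _ => Real.rpow_nonneg (hMnn i) _)
    have hsprodnn : (0:ℝ) ≤ ∏ i, s i ^ w i :=
      Finset.prod_nonneg (fun i _ => Real.rpow_nonneg (hsnn i) _)
    have hYprodnn : (0:ℝ) ≤ ∏ i, v i (R i ∪ {τ (σ i)}) ^ w i :=
      Finset.prod_nonneg (fun i _ => Real.rpow_nonneg (hvnn i _) _)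
    have hfinal : OPT ≤ (2 + n*wmax) * Real.exp 1 * (1+ε) *
        ∏ i, v i (R i ∪ {τ (σ i)}) ^ w i := by
      calc OPT ≤ (∏ i, Θ i ^ w i) * ∏ i, s i ^ w i := hchain1
        _ ≤ (Real.exp 1 * (1+ε')^m) * ((2 + n*wmax) * ∏ i, M i ^ w i) := by
            apply mul_le_mul hΘprod hchain2 hsprodnn
            positivity
        _ ≤ (Real.exp 1 * (1+ε')^m) * ((2 + n*wmax) * ∏ i, v i (R i ∪ {τ (σ i)}) ^ w i) := by
            apply mul_le_mul_of_nonneg_left _ (by positivity)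
            exact mul_le_mul_of_nonneg_left hσ hC1.le
        _ = (2 + n*wmax) * Real.exp 1 * (1+ε) * ∏ i, v i (R i ∪ {τ (σ i)}) ^ w i := by
            rw [hε]; ring
    calc OPT ≤ (2 + n*wmax) * Real.exp 1 * (1+ε) *
        ∏ i, v i (R i ∪ {τ (σ i)}) ^ w i := hfinal
      _ = (∏ i, v i (R i ∪ ((some (τ (σ i)) : Option G)).toFinset) ^ w i) *
          ((2 + n*wmax) * Real.exp 1 * (1+ε)) := by
          simp only [Option.toFinset_some]
          ring
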